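/- Let Ψ be a quasi-hyperbolic continuous linear cocycle over a compact base 𝐁. If x ∈ 𝐁, a ∈ α(x) and b ∈ ω(x), then dim E^u(b) ≥ dim 𝐄 − dim E^s(x) and dim E^s(a) ≥ dim 𝐄 − dim E^u(x). -/

import Mathlib

open Filter Topology

/-- A continuous linear cocycle (`ℝ`-action by bundle isomorphisms on the
trivial vector bundle `B × E`) over a continuous flow on `B`. -/
structure LinearCocycle (B E : Type*) [TopologicalSpace B]
    [NormedAddCommGroup E] [NormedSpace ℝ E] where
  flow : ℝ → B → B
  flow_cont : Continuous fun p : ℝ × B => flow p.1 p.2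
  flow_zero : ∀ b, flow 0 b = b
  flow_add : ∀ s t b, flow s (flow t b) = flow (s + t) b
  P : ℝ → B → E →L[ℝ] E
  P_cont : Continuous fun p : ℝ × B => P p.1 p.2
  P_zero : ∀ b, P 0 b = ContinuousLinearMap.id ℝ E
  P_comp : ∀ s t b, (P s (flow t b)).comp (P t b) = P (s + t) b

variable {B E : Type*} [TopologicalSpace B]
  [NormedAddCommGroup E] [NormedSpace ℝ E]

/-- Quasi-hyperbolicity: every nonzero vector has unbounded orbit. -/
def LinearCocycle.IsQuasiHyperbolic (Φ : LinearCocycle B E) : Prop :=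
  ∀ b : B, ∀ v : E, v ≠ 0 → ∀ C : ℝ, ∃ t : ℝ, C < ‖Φ.P t b v‖

/-- The subspace of vectors with bounded forward orbit. -/
def LinearCocycle.stable (Φ : LinearCocycle B E) (b : B) : Submodule ℝ E where
  carrier := {v | ∃ C : ℝ, ∀ t > (0:ℝ), ‖Φ.P t b v‖ ≤ C}
  add_mem' := by
    rintro u v ⟨C₁, h₁⟩ ⟨C₂, h₂⟩
    exact ⟨C₁ + C₂, fun t ht => by
      simpa [map_add] using (norm_add_le (Φ.P t b u) (Φ.P t b v)).trans
        (add_le_add (h₁ t ht) (h₂ t ht))⟩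
  zero_mem' := ⟨0, fun t ht => by simp⟩
  smul_mem' := by
    rintro c v ⟨C, h⟩
    exact ⟨‖c‖ * C, fun t ht => by
      rw [map_smul, norm_smul]
      exact mul_le_mul_of_nonneg_left (h t ht) (norm_nonneg c)⟩

/-- The subspace of vectors with bounded backward orbit. -/
def LinearCocycle.unstable (Φ : LinearCocycle B E) (b : B) : Submodule ℝ E where
  carrier := {v | ∃ C : ℝ, ∀ t > (0:ℝ), ‖Φ.P (-t) b v‖ ≤ C}
  add_mem' := by
    rintro u v ⟨C₁, h₁⟩ ⟨C₂, h₂⟩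
    exact ⟨C₁ + C₂, fun t ht => by
      simpa [map_add] using (norm_add_le (Φ.P (-t) b u) (Φ.P (-t) b v)).trans
        (add_le_add (h₁ t ht) (h₂ t ht))⟩
  zero_mem' := ⟨0, fun t ht => by simp⟩
  smul_mem' := by
    rintro c v ⟨C, h⟩
    exact ⟨‖c‖ * C, fun t ht => by
      rw [map_smul, norm_smul]
      exact mul_le_mul_of_nonneg_left (h t ht) (norm_nonneg c)⟩

/-- Uniform hyperbolicity of a linear cocycle over an invariant subset `Λ`. -/
def LinearCocycle.IsHyperbolicOn (Φ : LinearCocycle B E) (Λ : Set B) : Prop :=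
  ∃ Es Eu : B → Submodule ℝ E,
    (∀ t : ℝ, ∀ b ∈ Λ, (Es b).map (Φ.P t b : E →ₗ[ℝ] E) = Es (Φ.flow t b)) ∧
    (∀ t : ℝ, ∀ b ∈ Λ, (Eu b).map (Φ.P t b : E →ₗ[ℝ] E) = Eu (Φ.flow t b)) ∧
    (∀ b ∈ Λ, IsCompl (Es b) (Eu b)) ∧
    ∃ T > (0:ℝ), ∀ b ∈ Λ,
      (∀ v ∈ Es b, v ≠ 0 → ‖Φ.P T b v‖ < (1/2) * ‖v‖) ∧
      (∀ v ∈ Eu b, v ≠ 0 → ‖Φ.P (-T) b v‖ < (1/2) * ‖v‖)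

/-- The `ω`-limit set of `x` under the flow of the cocycle. -/
def LinearCocycle.omegaLimit (Φ : LinearCocycle B E) (x : B) : Set B :=
  {a | MapClusterPt a atTop fun t : ℝ => Φ.flow t x}

/-- The `α`-limit set of `x` under the flow of the cocycle. -/
def LinearCocycle.alphaLimit (Φ : LinearCocycle B E) (x : B) : Set B :=
  {a | MapClusterPt a atBot fun t : ℝ => Φ.flow t x}

namespace LinearCocycle

variable (Φ : LinearCocycle B E)

lemma flow_inv (s : ℝ) (y : B) : Φ.flow (-s) (Φ.flow s y) = y := by
  rw [Φ.flow_add, neg_add_cancel, Φ.flow_zero]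

lemma P_inv (s : ℝ) (y : B) (v : E) : Φ.P (-s) (Φ.flow s y) (Φ.P s y v) = v := by
  have := Φ.P_comp (-s) s y
  rw [neg_add_cancel, Φ.P_zero] at this
  calc Φ.P (-s) (Φ.flow s y) (Φ.P s y v)
      = ((Φ.P (-s) (Φ.flow s y)).comp (Φ.P s y)) v := rfl
    _ = v := by rw [this]; rfl

lemma P_apply (s t : ℝ) (y : B) (v : E) :
    Φ.P s (Φ.flow t y) (Φ.P t y v) = Φ.P (s + t) y v := by
  rw [← Φ.P_comp s t y]; rfl

lemma P_injective (s : ℝ) (y : B) : Function.Injective (Φ.P s y) := by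
  intro u v h
  have := congrArg (Φ.P (-s) (Φ.flow s y)) h
  rwa [Φ.P_inv, Φ.P_inv] at this

/-- Joint continuity of the evaluated cocycle. -/
lemma P_cont' : Continuous fun p : (ℝ × B) × E => Φ.P p.1.1 p.1.2 p.2 :=
  isBoundedBilinearMap_apply.continuous.comp ((Φ.P_cont.comp continuous_fst).prodMk continuous_snd)

/-- Uniform bound on compact time intervals. -/
lemma exists_bound [CompactSpace B] (r : ℝ) :
    ∃ M : ℝ, 1 ≤ M ∧ ∀ y : B, ∀ s : ℝ, |s| ≤ r → ∀ v : E,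
      ‖Φ.P s y v‖ ≤ M * ‖v‖ ∧ ‖v‖ ≤ M * ‖Φ.P s y v‖ := by
  have hc : IsCompact ((Set.Icc (-r) r) ×ˢ (Set.univ : Set B)) :=
    (isCompact_Icc).prod isCompact_univ
  have hcont : Continuous fun p : ℝ × B => ‖Φ.P p.1 p.2‖ := Φ.P_cont.norm
  obtain ⟨M₀, hM₀⟩ := hc.exists_bound_of_continuousOn hcont.continuousOn
  refine ⟨max M₀ 1, le_max_right _ _, fun y s hs v => ?_⟩
  have hsmem : (s, y) ∈ (Set.Icc (-r) r) ×ˢ (Set.univ : Set B) := by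
    refine ⟨abs_le.mp hs, Set.mem_univ _⟩
  have h1 : ‖Φ.P s y‖ ≤ max M₀ 1 := le_trans (by simpa using hM₀ (s, y) hsmem) (le_max_left _ _)
  have hb1 : ‖Φ.P s y v‖ ≤ max M₀ 1 * ‖v‖ :=
    le_trans ((Φ.P s y).le_opNorm v) (by gcongr)
  have hsmem' : (-s, Φ.flow s y) ∈ (Set.Icc (-r) r) ×ˢ (Set.univ : Set B) := by
    refine ⟨abs_le.mp (by rwa [abs_neg]), Set.mem_univ _⟩
  have h2 : ‖Φ.P (-s) (Φ.flow s y)‖ ≤ max M₀ 1 :=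
    le_trans (by simpa using hM₀ (-s, Φ.flow s y) hsmem') (le_max_left _ _)
  refine ⟨hb1, ?_⟩
  calc ‖v‖ = ‖Φ.P (-s) (Φ.flow s y) (Φ.P s y v)‖ := by rw [Φ.P_inv]
    _ ≤ ‖Φ.P (-s) (Φ.flow s y)‖ * ‖Φ.P s y v‖ := (Φ.P _ _).le_opNorm _
    _ ≤ max M₀ 1 * ‖Φ.P s y v‖ := by gcongr

end LinearCocycle
namespace LinearCocycle

/-- **Key lemma**: for a quasi-hyperbolic cocycle over a compact base, the norm along an
orbit segment is controlled by the endpoints. -/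
lemma exists_key_bound [CompactSpace B] [FiniteDimensional ℝ E]
    (Φ : LinearCocycle B E) (hqh : Φ.IsQuasiHyperbolic) :
    ∃ K : ℝ, 1 ≤ K ∧ ∀ y : B, ∀ v : E, ∀ t : ℝ, 0 ≤ t → ∀ s ∈ Set.Icc (0:ℝ) t,
      ‖Φ.P s y v‖ ≤ K * max ‖v‖ ‖Φ.P t y v‖ := by
  by_contra hcon
  push_neg at hcon
  -- counterexample data for each `n : ℕ`
  have hdata : ∀ n : ℕ, ∃ y : B, ∃ v : E, ∃ t : ℝ, 0 ≤ t ∧ ∃ s ∈ Set.Icc (0:ℝ) t,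
      (n + 1 : ℝ) * max ‖v‖ ‖Φ.P t y v‖ < ‖Φ.P s y v‖ := by
    intro n
    obtain ⟨y, v, t, ht, s, hs, hlt⟩ := hcon (n + 1 : ℝ) (le_add_of_nonneg_left (Nat.cast_nonneg n))
    exact ⟨y, v, t, ht, s, hs, hlt⟩
  choose y v t ht s hs hlt using hdata
  -- replace `s` by the argmax over `[0, t n]`
  have hmax : ∀ n : ℕ, ∃ s' ∈ Set.Icc (0:ℝ) (t n),
      ∀ u ∈ Set.Icc (0:ℝ) (t n), ‖Φ.P u (y n) (v n)‖ ≤ ‖Φ.P s' (y n) (v n)‖ := by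
    intro n
    have hco : Continuous fun u : ℝ => ‖Φ.P u (y n) (v n)‖ := by
      have : Continuous fun u : ℝ => Φ.P u (y n) (v n) :=
        Φ.P_cont'.comp (((continuous_id.prodMk continuous_const).prodMk continuous_const))
      exact this.norm
    obtain ⟨s', hmem, hmax⟩ := isCompact_Icc.exists_isMaxOn (Set.nonempty_Icc.mpr (ht n))
      hco.continuousOn
    exact ⟨s', hmem, fun u hu => hmax hu⟩
  choose s' hs' hmaxOn using hmax
  set N : ℕ → ℝ := fun n => ‖Φ.P (s' n) (y n) (v n)‖ with hN
  have hNbig : ∀ n : ℕ, (n + 1 : ℝ) * max ‖v n‖ ‖Φ.P (t n) (y n) (v n)‖ < N n :=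
    fun n => lt_of_lt_of_le (hlt n) (hmaxOn n (s n) (hs n))
  have hvne : ∀ n, v n ≠ 0 := by
    intro n hv
    have := hNbig n
    rw [hN] at this
    simp [hv] at this
  have hvpos : ∀ n, 0 < ‖v n‖ := fun n => norm_pos_iff.mpr (hvne n)
  have hNpos : ∀ n, 0 < N n := by
    intro n
    refine lt_of_le_of_lt ?_ (hNbig n)
    positivity
  have hNv : ∀ n : ℕ, (n + 1 : ℝ) * ‖v n‖ < N n := by
    intro n
    refine lt_of_le_of_lt ?_ (hNbig n)
    exact mul_le_mul_of_nonneg_left (le_max_left _ _) (by positivity)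
  have hNt : ∀ n : ℕ, (n + 1 : ℝ) * ‖Φ.P (t n) (y n) (v n)‖ < N n := by
    intro n
    refine lt_of_le_of_lt ?_ (hNbig n)
    exact mul_le_mul_of_nonneg_left (le_max_right _ _) (by positivity)
  set z : ℕ → B := fun n => Φ.flow (s' n) (y n)
  set w : ℕ → E := fun n => (N n)⁻¹ • Φ.P (s' n) (y n) (v n)
  have hwnorm : ∀ n, ‖w n‖ = 1 := by
    intro n
    rw [norm_smul, norm_inv, Real.norm_eq_abs, abs_of_pos (hNpos n)]
    exact inv_mul_cancel₀ (hNpos n).ne'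
  -- orbit of `w n` is bounded by 1 on the (long) interval
  have hbdd : ∀ n : ℕ, ∀ τ : ℝ, -(s' n) ≤ τ → τ ≤ t n - s' n → ‖Φ.P τ (z n) (w n)‖ ≤ 1 := by
    intro n τ h1 h2
    have heq : Φ.P τ (z n) (w n) = (N n)⁻¹ • Φ.P (τ + s' n) (y n) (v n) := by
      simp only [w, z, map_smul, Φ.P_apply]
    rw [heq, norm_smul, norm_inv, Real.norm_eq_abs, abs_of_pos (hNpos n)]
    have hmem : τ + s' n ∈ Set.Icc (0:ℝ) (t n) :=
      ⟨by linarith, by linarith⟩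
    have := hmaxOn n (τ + s' n) hmem
    rw [inv_mul_le_iff₀ (hNpos n), mul_one]
    exact this
  -- the interval lengths go to infinity
  have hlen : ∀ r : ℝ, ∀ᶠ n : ℕ in atTop, r ≤ s' n ∧ r ≤ t n - s' n := by
    intro r
    obtain ⟨M, hM1, hM⟩ := Φ.exists_bound r
    filter_upwards [eventually_ge_atTop (⌈M⌉₊)] with n hn
    have hnM : M ≤ (n + 1 : ℝ) := le_trans (Nat.le_ceil M) (by exact_mod_cast Nat.le_succ_of_le hn)
    constructor
    · by_contra hr
      push_neg at hr
      have habs : |s' n| ≤ r := abs_le.mpr ⟨by linarith [(hs' n).1], hr.le⟩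
      have := (hM (y n) (s' n) habs (v n)).1
      have : N n ≤ M * ‖v n‖ := this
      nlinarith [hNv n, hvpos n, hnM]
    · by_contra hr
      push_neg at hr
      have habs : |t n - s' n| ≤ r := abs_le.mpr ⟨by linarith [(hs' n).2], hr.le⟩
      have heq : Φ.P (t n - s' n) (z n) (Φ.P (s' n) (y n) (v n)) = Φ.P (t n) (y n) (v n) := by
        rw [Φ.P_apply, sub_add_cancel]
      have := (hM (z n) (t n - s' n) habs (Φ.P (s' n) (y n) (v n))).2
      rw [heq] at this
      have : N n ≤ M * ‖Φ.P (t n) (y n) (v n)‖ := this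
      nlinarith [hNt n, hNpos n, norm_nonneg (Φ.P (t n) (y n) (v n)), hnM]
  -- pass to an ultrafilter limit
  obtain ⟨𝒰, h𝒰⟩ := Filter.exists_ultrafilter_le (atTop : Filter ℕ)
  have hcompact : IsCompact ((Set.univ : Set B) ×ˢ Metric.sphere (0:E) 1) :=
    isCompact_univ.prod (isCompact_sphere 0 1)
  have hmem𝒰 : (Set.univ : Set B) ×ˢ Metric.sphere (0:E) 1 ∈
      Ultrafilter.map (fun n => (z n, w n)) 𝒰 := by
    refine Filter.mem_map.mpr ?_
    have : ∀ n : ℕ, (z n, w n) ∈ (Set.univ : Set B) ×ˢ Metric.sphere (0:E) 1 := by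
      intro n
      exact ⟨Set.mem_univ _, by simpa [Metric.mem_sphere, dist_eq_norm] using hwnorm n⟩
    exact Filter.Eventually.of_forall this
  obtain ⟨⟨zl, wl⟩, hzw_mem, hzw_le⟩ :=
    hcompact.ultrafilter_le_nhds' (Ultrafilter.map (fun n => (z n, w n)) 𝒰) hmem𝒰
  have hwl : ‖wl‖ = 1 := by simpa [Metric.mem_sphere, dist_eq_norm] using hzw_mem.2
  have htends : Filter.Tendsto (fun n => (z n, w n)) 𝒰 (𝓝 (zl, wl)) := hzw_le
  -- the limit has bounded orbit
  have hbound : ∀ τ : ℝ, ‖Φ.P τ zl wl‖ ≤ 1 := by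
    intro τ
    have hcont : Continuous fun p : B × E => ‖Φ.P τ p.1 p.2‖ := by
      have : Continuous fun p : B × E => Φ.P τ p.1 p.2 :=
        Φ.P_cont'.comp ((continuous_const.prodMk continuous_fst).prodMk continuous_snd)
      exact this.norm
    have htlim : Filter.Tendsto (fun n => ‖Φ.P τ (z n) (w n)‖) 𝒰 (𝓝 ‖Φ.P τ zl wl‖) :=
      (hcont.tendsto (zl, wl)).comp htends
    refine le_of_tendsto htlim ?_
    have hev : ∀ᶠ n : ℕ in atTop, |τ| ≤ s' n ∧ |τ| ≤ t n - s' n := hlen |τ|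
    refine Filter.Eventually.filter_mono h𝒰 (hev.mono fun n hn => ?_)
    exact hbdd n τ (by linarith [hn.1, neg_abs_le τ]) (by linarith [hn.2, le_abs_self τ])
  obtain ⟨τ, hτ⟩ := hqh zl wl (by intro h; rw [h] at hwl; simp at hwl) 1
  exact absurd (hbound τ) (not_le.mpr hτ)

end LinearCocycle
namespace LinearCocycle

/-- Uniform growth on a subspace transverse to the stable space. -/
lemma exists_growth [CompactSpace B] [FiniteDimensional ℝ E]
    (Φ : LinearCocycle B E) (hqh : Φ.IsQuasiHyperbolic)
    (x : B) (W : Submodule ℝ E) (hW : Disjoint (Φ.stable x) W) :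
    ∃ t₀ : ℝ, 0 ≤ t₀ ∧ ∀ t : ℝ, t₀ ≤ t → ∀ v ∈ W, ‖v‖ ≤ ‖Φ.P t x v‖ := by
  obtain ⟨K, hK1, hK⟩ := Φ.exists_key_bound hqh
  by_contra hcon
  push_neg at hcon
  have hdata : ∀ n : ℕ, ∃ t : ℝ, (n : ℝ) ≤ t ∧ ∃ v ∈ W, ‖Φ.P t x v‖ < ‖v‖ := by
    intro n
    obtain ⟨t, h1, v, h2, h3⟩ := hcon (n : ℝ) (Nat.cast_nonneg n)
    exact ⟨t, h1, v, h2, h3⟩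
  choose t htn v hvW hvlt using hdata
  have hvne : ∀ n, v n ≠ 0 := by
    intro n hv
    have := hvlt n
    simp [hv] at this
  have hvpos : ∀ n, 0 < ‖v n‖ := fun n => norm_pos_iff.mpr (hvne n)
  set u : ℕ → E := fun n => ‖v n‖⁻¹ • v n with hu
  have huW : ∀ n, u n ∈ W := fun n => W.smul_mem _ (hvW n)
  have hunorm : ∀ n, ‖u n‖ = 1 := by
    intro n
    rw [hu]
    simp only [norm_smul, norm_inv, norm_norm]
    exact inv_mul_cancel₀ (hvpos n).ne'
  have htpos : ∀ n : ℕ, (0:ℝ) ≤ t n := fun n => le_trans (Nat.cast_nonneg n) (htn n)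
  have hbd : ∀ n : ℕ, ∀ s ∈ Set.Icc (0:ℝ) (t n), ‖Φ.P s x (u n)‖ ≤ K := by
    intro n s hsmem
    have h1 := hK x (u n) (t n) (htpos n) s hsmem
    have h2 : ‖Φ.P (t n) x (u n)‖ ≤ 1 := by
      have : Φ.P (t n) x (u n) = ‖v n‖⁻¹ • Φ.P (t n) x (v n) := by rw [hu]; simp
      rw [this, norm_smul, norm_inv, norm_norm]
      rw [inv_mul_le_one₀ (hvpos n)]
      exact (hvlt n).le
    have h3 : max ‖u n‖ ‖Φ.P (t n) x (u n)‖ ≤ 1 := max_le (hunorm n).le h2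
    calc ‖Φ.P s x (u n)‖ ≤ K * max ‖u n‖ ‖Φ.P (t n) x (u n)‖ := h1
      _ ≤ K * 1 := mul_le_mul_of_nonneg_left h3 (by linarith)
      _ = K := mul_one K
  -- ultrafilter limit of `u n` in the compact set `W ∩ sphere`
  obtain ⟨𝒱, h𝒱⟩ := Filter.exists_ultrafilter_le (atTop : Filter ℕ)
  have hWclosed : IsClosed (W : Set E) := Submodule.closed_of_finiteDimensional W
  have hScompact : IsCompact ((W : Set E) ∩ Metric.sphere (0:E) 1) :=
    (isCompact_sphere 0 1).of_isClosed_subset (hWclosed.inter Metric.isClosed_sphere)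
      Set.inter_subset_right
  have hmemS : ((W : Set E) ∩ Metric.sphere (0:E) 1) ∈ Ultrafilter.map u 𝒱 := by
    refine Filter.mem_map.mpr (Filter.Eventually.of_forall fun n => ?_)
    exact ⟨huW n, by simpa [Metric.mem_sphere, dist_eq_norm] using hunorm n⟩
  obtain ⟨ul, hul_mem, hul_le⟩ := hScompact.ultrafilter_le_nhds' (Ultrafilter.map u 𝒱) hmemS
  have hul_norm : ‖ul‖ = 1 := by simpa [Metric.mem_sphere, dist_eq_norm] using hul_mem.2
  have hul_stable : ul ∈ Φ.stable x := by
    refine ⟨K, fun s hs => ?_⟩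
    have htends : Filter.Tendsto (fun n => ‖Φ.P s x (u n)‖) 𝒱 (𝓝 ‖Φ.P s x ul‖) :=
      ((Φ.P s x).continuous.norm.tendsto ul).comp hul_le
    refine le_of_tendsto htends ?_
    have hev : ∀ᶠ n : ℕ in atTop, s ≤ (n : ℝ) := by
      filter_upwards [eventually_ge_atTop ⌈s⌉₊] with n hn
      exact le_trans (Nat.le_ceil s) (by exact_mod_cast hn)
    refine Filter.Eventually.filter_mono h𝒱 (hev.mono fun n hn => ?_)
    exact hbd n s ⟨hs.le, le_trans hn (htn n)⟩
  have : ul = 0 := Submodule.disjoint_def.mp hW ul hul_stable hul_mem.1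
  rw [this] at hul_norm
  simp at hul_norm

end LinearCocycle
namespace LinearCocycle

lemma omega_le_unstable [CompactSpace B] [FiniteDimensional ℝ E]
    (Φ : LinearCocycle B E) (hqh : Φ.IsQuasiHyperbolic)
    (x b : B) (hb : b ∈ Φ.omegaLimit x) :
    Module.finrank ℝ E - Module.finrank ℝ (Φ.stable x) ≤
      Module.finrank ℝ (Φ.unstable b) := by
  classical
  obtain ⟨K, hK1, hK⟩ := Φ.exists_key_bound hqh
  obtain ⟨W, hcompl⟩ := Submodule.exists_isCompl (Φ.stable x)
  obtain ⟨t₀, ht₀0, hgrow⟩ := Φ.exists_growth hqh x W hcompl.disjoint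
  obtain ⟨𝒰, h𝒰le, h𝒰tend⟩ := mapClusterPt_iff_ultrafilter.mp hb
  set k := Module.finrank ℝ W with hk
  set e := Module.finBasis ℝ W with he
  set ebE : Fin k → E := fun i => (e i : E) with hebE
  have hebE_mem : ∀ i, ebE i ∈ W := fun i => (e i).2
  have hebE_li : LinearIndependent ℝ ebE :=
    e.linearIndependent.map' W.subtype (Submodule.ker_subtype W)
  set F := EuclideanSpace ℝ (Fin (Module.finrank ℝ E)) with hF
  set φ : E ≃L[ℝ] F := toEuclidean with hφ
  set Cφ : ℝ := ‖(φ.symm : F →L[ℝ] E)‖ with hCφ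
  have hCφ0 : 0 ≤ Cφ := norm_nonneg _
  -- linear independence of the pushed-forward frames
  have hind : ∀ t : ℝ, LinearIndependent ℝ (fun i => φ (Φ.P t x (ebE i))) := by
    intro t
    have h1 : LinearIndependent ℝ (fun i => Φ.P t x (ebE i)) := by
      have := hebE_li.map' ((Φ.P t x : E →ₗ[ℝ] E))
        (LinearMap.ker_eq_bot.mpr (Φ.P_injective t x))
      simpa [Function.comp_def] using this
    have := h1.map' (φ.toLinearEquiv : E →ₗ[ℝ] F) φ.toLinearEquiv.ker
    simpa [Function.comp_def] using this
  set g : ℝ → Fin k → F := fun t => @InnerProductSpace.gramSchmidtNormed ℝ F _ _ _ (Fin k) (inferInstance : LinearOrder (Fin k)) (inferInstance : LocallyFiniteOrderBot (Fin k)) (inferInstance : WellFoundedLT (Fin k)) (fun i => φ (Φ.P t x (ebE i))) with hg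
  have hON : ∀ t : ℝ, Orthonormal ℝ (g t) := by
    intro t
    rw [hg]
    exact @InnerProductSpace.gramSchmidtNormed_orthonormal ℝ F _ _ _ (Fin k) (inferInstance : LinearOrder (Fin k)) (inferInstance : LocallyFiniteOrderBot (Fin k)) (inferInstance : WellFoundedLT (Fin k)) _ (hind t)
  -- the frame vectors lie in the image of `W`
  have hmem : ∀ (t : ℝ) (i : Fin k),
      φ.symm (g t i) ∈ W.map (Φ.P t x : E →ₗ[ℝ] E) := by
    intro t i
    have h1 : g t i ∈ Submodule.span ℝ (Set.range fun i => φ (Φ.P t x (ebE i))) := by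
      have h2 : g t i ∈ Submodule.span ℝ (Set.range (g t)) :=
        Submodule.subset_span (Set.mem_range_self i)
      rw [hg] at h2 ⊢
      rwa [@InnerProductSpace.span_gramSchmidtNormed_range ℝ F _ _ _ (Fin k) (inferInstance : LinearOrder (Fin k)) (inferInstance : LocallyFiniteOrderBot (Fin k)) (inferInstance : WellFoundedLT (Fin k)) (fun i => φ (Φ.P t x (ebE i))),
        @InnerProductSpace.span_gramSchmidt ℝ F _ _ _ (Fin k) (inferInstance : LinearOrder (Fin k)) (inferInstance : LocallyFiniteOrderBot (Fin k)) (inferInstance : WellFoundedLT (Fin k)) (fun i => φ (Φ.P t x (ebE i)))] at h2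
    have h3 : Submodule.span ℝ (Set.range fun i => φ (Φ.P t x (ebE i))) ≤
        (W.map (Φ.P t x : E →ₗ[ℝ] E)).map (φ.toLinearEquiv : E →ₗ[ℝ] F) := by
      rw [Submodule.span_le]
      rintro _ ⟨i, rfl⟩
      exact Submodule.mem_map_of_mem (Submodule.mem_map_of_mem (hebE_mem i))
    obtain ⟨u, hu, hequ⟩ := h3 h1
    have : φ.symm (g t i) = u := by
      have := congrArg φ.symm hequ
      simpa using this.symm
    rwa [this]
  -- backward bound on the image of `W`
  have hback : ∀ t : ℝ, t₀ ≤ t → ∀ w ∈ W.map (Φ.P t x : E →ₗ[ℝ] E), ∀ τ : ℝ, 0 ≤ τ → τ ≤ t →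
      ‖Φ.P (-τ) (Φ.flow t x) w‖ ≤ K * ‖w‖ := by
    rintro t ht w hw τ hτ0 hτt
    obtain ⟨v, hvW, rfl⟩ := hw
    have hw_eq : (Φ.P t x : E →ₗ[ℝ] E) v = Φ.P t x v := rfl
    rw [hw_eq]
    have heq : Φ.P (-τ) (Φ.flow t x) (Φ.P t x v) = Φ.P (t - τ) x v := by
      rw [Φ.P_apply]; ring_nf
    rw [heq]
    have h1 := hK x v t (le_trans ht₀0 ht) (t - τ) ⟨by linarith, by linarith⟩
    have h2 : ‖v‖ ≤ ‖Φ.P t x v‖ := hgrow t ht v hvW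
    rwa [max_eq_right h2] at h1
  -- limit of the frames along the ultrafilter
  set S : Set (Fin k → F) := Set.univ.pi fun _ => Metric.sphere (0:F) 1 with hS
  have hScomp : IsCompact S := isCompact_univ_pi fun _ => isCompact_sphere 0 1
  have hmemS : S ∈ Ultrafilter.map g 𝒰 := by
    refine Filter.mem_map.mpr (Filter.Eventually.of_forall fun t => ?_)
    intro i _
    simpa [Metric.mem_sphere, dist_eq_norm] using (hON t).1 i
  obtain ⟨gl, hgl_mem, hgl_le⟩ := hScomp.ultrafilter_le_nhds' (Ultrafilter.map g 𝒰) hmemS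
  have htendsto_i : ∀ i, Filter.Tendsto (fun t => g t i) 𝒰 (𝓝 (gl i)) :=
    fun i => ((continuous_apply i).tendsto gl).comp hgl_le
  have hgl_on : Orthonormal ℝ gl := by
    rw [orthonormal_iff_ite]
    intro i j
    have h1 : Filter.Tendsto (fun t => (inner ℝ (g t i) (g t j) : ℝ)) 𝒰
        (𝓝 (inner ℝ (gl i) (gl j))) := (htendsto_i i).inner (htendsto_i j)
    have h2 : (fun t => (inner ℝ (g t i) (g t j) : ℝ)) =
        fun _ => (if i = j then (1:ℝ) else 0) :=
      funext fun t => orthonormal_iff_ite.mp (hON t) i j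
    rw [h2] at h1
    exact tendsto_nhds_unique h1 tendsto_const_nhds
  set fl : Fin k → E := fun i => φ.symm (gl i) with hfl
  have hfl_li : LinearIndependent ℝ fl := by
    have := hgl_on.linearIndependent.map' (φ.symm.toLinearEquiv : F →ₗ[ℝ] E)
      φ.symm.toLinearEquiv.ker
    simpa [Function.comp_def] using this
  -- the limit vectors are in the unstable space of `b`
  have hfl_mem : ∀ i, fl i ∈ Φ.unstable b := by
    intro i
    refine ⟨K * Cφ, fun τ hτ => ?_⟩
    have htt : Filter.Tendsto (fun t => ‖Φ.P (-τ) (Φ.flow t x) (φ.symm (g t i))‖) 𝒰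
        (𝓝 ‖Φ.P (-τ) b (fl i)‖) := by
      have hpair : Filter.Tendsto (fun t => (((-τ : ℝ), Φ.flow t x), φ.symm (g t i))) 𝒰
          (𝓝 (((-τ : ℝ), b), fl i)) :=
        (tendsto_const_nhds.prodMk_nhds h𝒰tend).prodMk_nhds
          ((φ.symm.continuous.tendsto _).comp (htendsto_i i))
      exact (Φ.P_cont'.norm.tendsto _).comp hpair
    refine le_of_tendsto htt ?_
    have hev : ∀ᶠ t : ℝ in 𝒰, max t₀ τ ≤ t := h𝒰le (eventually_ge_atTop _)
    refine hev.mono fun t ht => ?_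
    have ht₀ : t₀ ≤ t := le_trans (le_max_left _ _) ht
    have hτt : τ ≤ t := le_trans (le_max_right _ _) ht
    have hb1 := hback t ht₀ _ (hmem t i) τ hτ.le hτt
    have hb2 : ‖φ.symm (g t i)‖ ≤ Cφ := by
      have hn1 : ‖g t i‖ = 1 := (hON t).1 i
      calc ‖φ.symm (g t i)‖ = ‖(φ.symm : F →L[ℝ] E) (g t i)‖ := by rfl
        _ ≤ Cφ * ‖g t i‖ := (φ.symm : F →L[ℝ] E).le_opNorm _
        _ = Cφ := by rw [hn1, mul_one]
    calc ‖Φ.P (-τ) (Φ.flow t x) (φ.symm (g t i))‖ ≤ K * ‖φ.symm (g t i)‖ := hb1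
      _ ≤ K * Cφ := by
          exact mul_le_mul_of_nonneg_left hb2 (by linarith)
  -- dimension count
  have hspan : Submodule.span ℝ (Set.range fl) ≤ Φ.unstable b := by
    rw [Submodule.span_le]
    rintro _ ⟨i, rfl⟩
    exact hfl_mem i
  have hrank : Module.finrank ℝ (Submodule.span ℝ (Set.range fl)) = k := by
    rw [finrank_span_eq_card hfl_li, Fintype.card_fin]
  have h1 : k ≤ Module.finrank ℝ (Φ.unstable b) := by
    rw [← hrank]
    exact Submodule.finrank_mono hspan
  have h2 : Module.finrank ℝ (Φ.stable x) + k = Module.finrank ℝ E :=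
    Submodule.finrank_add_eq_of_isCompl hcompl
  omega

end LinearCocycle

namespace LinearCocycle

/-- The time-reversed cocycle. -/
def reverse (Φ : LinearCocycle B E) : LinearCocycle B E where
  flow t b := Φ.flow (-t) b
  flow_cont := Φ.flow_cont.comp ((continuous_fst.neg).prodMk continuous_snd)
  flow_zero b := by simp [Φ.flow_zero]
  flow_add s t b := by show Φ.flow (-s) (Φ.flow (-t) b) = Φ.flow (-(s+t)) b; rw [Φ.flow_add]; congr 1; ring
  P t b := Φ.P (-t) b
  P_cont := Φ.P_cont.comp ((continuous_fst.neg).prodMk continuous_snd)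
  P_zero b := by simp [Φ.P_zero]
  P_comp s t b := by show (Φ.P (-s) (Φ.flow (-t) b)).comp (Φ.P (-t) b) = Φ.P (-(s+t)) b; rw [Φ.P_comp]; congr 1; ring

lemma reverse_isQuasiHyperbolic {Φ : LinearCocycle B E} (hqh : Φ.IsQuasiHyperbolic) :
    Φ.reverse.IsQuasiHyperbolic := by
  intro b v hv C
  obtain ⟨t, ht⟩ := hqh b v hv C
  exact ⟨-t, by simpa [reverse] using ht⟩

lemma reverse_stable (Φ : LinearCocycle B E) (y : B) : Φ.reverse.stable y = Φ.unstable y := by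
  ext v
  exact Iff.rfl

lemma reverse_unstable (Φ : LinearCocycle B E) (y : B) : Φ.reverse.unstable y = Φ.stable y := by
  ext v
  show (∃ C : ℝ, ∀ t > (0:ℝ), ‖Φ.P (-(-t)) y v‖ ≤ C) ↔ _
  simp only [neg_neg]
  exact Iff.rfl

lemma reverse_omegaLimit (Φ : LinearCocycle B E) (x : B) :
    Φ.reverse.omegaLimit x = Φ.alphaLimit x := by
  ext a
  show MapClusterPt a atTop (fun t : ℝ => Φ.flow (-t) x) ↔
    MapClusterPt a atBot (fun t : ℝ => Φ.flow t x)
  unfold MapClusterPt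
  have : Filter.map (fun t : ℝ => Φ.flow (-t) x) atTop =
      Filter.map (fun t : ℝ => Φ.flow t x) atBot := by
    rw [← Filter.map_neg_atTop (G := ℝ), Filter.map_map]
    rfl
  rw [this]

end LinearCocycle

/-- Sacker–Sell inequality: for a quasi-hyperbolic continuous linear cocycle,
if `a ∈ α(x)` and `b ∈ ω(x)` then `dim E^u(b) ≥ dim 𝐄 − dim E^s(x)` and
`dim E^s(a) ≥ dim 𝐄 − dim E^u(x)`. -/
theorem limit_set_dimension_inequality
    [CompactSpace B] [FiniteDimensional ℝ E]
    (Φ : LinearCocycle B E) (hqh : Φ.IsQuasiHyperbolic)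
    (x : B) (a : B) (ha : a ∈ Φ.alphaLimit x)
    (b : B) (hb : b ∈ Φ.omegaLimit x) :
    Module.finrank ℝ E - Module.finrank ℝ (Φ.stable x) ≤
        Module.finrank ℝ (Φ.unstable b) ∧
    Module.finrank ℝ E - Module.finrank ℝ (Φ.unstable x) ≤
        Module.finrank ℝ (Φ.stable a) := by
  constructor
  · exact Φ.omega_le_unstable hqh x b hb
  · have ha' : a ∈ Φ.reverse.omegaLimit x := by rwa [Φ.reverse_omegaLimit]
    have := Φ.reverse.omega_le_unstable (LinearCocycle.reverse_isQuasiHyperbolic hqh) x a ha'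
    rwa [Φ.reverse_stable, Φ.reverse_unstable] at this
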